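/- For even n ≥ 6 and each 2 ≤ j ≤ n-2, the lobster tree A displays the character χ_j = X_{≤j-2} | a_{j-1} | b_{j-1} | a_j a_{j+1} | b_j b_{j+1} | a_{j+2} | b_{j+2} | X_{≥j+3}. -/

import Mathlib

namespace PP

/-- A vertex is a leaf (degree at most one) if it has at most one neighbour. -/
def IsLeafVert {V : Type} (G : SimpleGraph V) (w : V) : Prop :=
  ∀ w₁ w₂ : V, G.Adj w w₁ → G.Adj w w₂ → w₁ = w₂

/-- A (finite, unrooted) phylogenetic tree on a label set `X ⊆ L`:
its leaves are bijectively labelled by the elements of `X`. -/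
structure PhyloTree {L : Type} (X : Set L) where
  V : Type
  finV : Finite V
  G : SimpleGraph V
  isTree : G.IsTree
  leaf : L → V
  leaf_injOn : Set.InjOn leaf X
  leaf_isLeaf : ∀ x ∈ X, IsLeafVert G (leaf x)
  leaf_surj : ∀ w, IsLeafVert G w → ∃ x ∈ X, leaf x = w

/-- The vertex set of the minimal subtree `T[S]` spanning the leaves labelled by `S ∩ X`. -/
def subtree {L : Type} {X : Set L} (T : PhyloTree X) (S : Set L) : Set T.V :=
  {w | ∃ x ∈ S ∩ X, ∃ y ∈ S ∩ X,
        ∃ p : T.G.Walk (T.leaf x) (T.leaf y), p.IsPath ∧ w ∈ p.support}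

/-- `T` displays the character `χ` (a state assignment, whose nonempty fibres on `X`
are the states) if the minimal subtrees spanning distinct states are vertex-disjoint. -/
def displays {L : Type} {X : Set L} (T : PhyloTree X) (χ : L → ℕ) : Prop :=
  ∀ s t : ℕ, s ≠ t → Disjoint (subtree T {x | χ x = s}) (subtree T {x | χ x = t})

/-- A set of characters is compatible if some tree on `X` displays all of them. -/
def compatible {L : Type} (X : Set L) (C : Set (L → ℕ)) : Prop :=
  ∃ T : PhyloTree X, ∀ χ ∈ C, displays T χ

/-- Labels: `(false, i)` is `aᵢ`, `(true, i)` is `bᵢ`. -/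
abbrev Lbl : Type := Bool × ℕ

def a (i : ℕ) : Lbl := (false, i)
def b (i : ℕ) : Lbl := (true, i)

/-- `X = {a₁,…,aₙ,b₁,…,bₙ}`. -/
def Xset (n : ℕ) : Set Lbl := {p | 1 ≤ p.2 ∧ p.2 ≤ n}

/-- `X_{≤ i} = {aⱼ, bⱼ : 1 ≤ j ≤ i}`. -/
def XLE (i : ℕ) : Set Lbl := {p | 1 ≤ p.2 ∧ p.2 ≤ i}

/-- χ_j = X_{≤j-2} | a_{j-1} | b_{j-1} | a_j a_{j+1} | b_j b_{j+1} | a_{j+2} | b_{j+2} | X_{≥j+3} -/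
def chi (j : ℕ) : Lbl → ℕ := fun p =>
  if p.2 + 2 ≤ j then 0
  else if p.2 + 1 = j then cond p.1 2 1
  else if p.2 ≤ j + 1 then cond p.1 4 3
  else if p.2 = j + 2 then cond p.1 6 5
  else 7

def phiMain (j i : ℕ) : ℕ :=
  if i < j then 0 else if i = j then 3 else if i = j + 1 then 4 else 5

def phiSide (j i : ℕ) : ℕ :=
  if i + 3 ≤ j then 0 else if i + 2 = j then 1 else if i + 1 = j then 2 else 5

/-- For even j: φ_j = X_{≤j-3}∪{b_{j-2},b_{j-1}} | a_{j-2} | a_{j-1} | b_j | b_{j+1} | {a_j,a_{j+1}}∪X_{≥j+2};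
for odd j the roles of a and b are swapped. -/
def phi (j : ℕ) : Lbl → ℕ := fun p =>
  if j % 2 = 0 then cond p.1 (phiMain j p.2) (phiSide j p.2)
  else cond p.1 (phiSide j p.2) (phiMain j p.2)

/-- Ω_A = a₁b₁b₂ | {a₂} ∪ X_{≥3}. -/
def OmA : Lbl → ℕ := fun p =>
  cond p.1 (if p.2 ≤ 2 then 0 else 1) (if p.2 = 1 then 0 else 1)

/-- Ω_B = X_{≤n-2} ∪ {b_{n-1}} | a_{n-1} aₙ bₙ. -/
def OmB (n : ℕ) : Lbl → ℕ := fun p =>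
  cond p.1 (if p.2 = n then 1 else 0) (if p.2 + 1 ≥ n then 1 else 0)

/-- The edges of the lobster `A`: central path a₁,u₁,…,u_{n-1},aₙ; edges uᵢvᵢ;
for odd i, vᵢ is adjacent to bᵢ and b_{i+1}; for even i, vᵢ is adjacent to aᵢ and a_{i+1}. -/
def AdjSpecA (n : ℕ) {X : Set Lbl} (T : PhyloTree X) (u v : ℕ → T.V) (w w' : T.V) : Prop :=
  (w = T.leaf (a 1) ∧ w' = u 1) ∨
  (∃ i, 1 ≤ i ∧ i + 1 ≤ n - 1 ∧ w = u i ∧ w' = u (i + 1)) ∨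
  (w = u (n - 1) ∧ w' = T.leaf (a n)) ∨
  (∃ i, 1 ≤ i ∧ i ≤ n - 1 ∧ w = u i ∧ w' = v i) ∨
  (∃ i, 1 ≤ i ∧ i ≤ n - 1 ∧ i % 2 = 1 ∧ w = v i ∧
      (w' = T.leaf (b i) ∨ w' = T.leaf (b (i + 1)))) ∨
  (∃ i, 1 ≤ i ∧ i ≤ n - 1 ∧ i % 2 = 0 ∧ w = v i ∧
      (w' = T.leaf (a i) ∨ w' = T.leaf (a (i + 1))))

/-- `T`, with internal vertices `u i`, `v i` (1 ≤ i ≤ n-1), is the lobster `A`. -/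
def IsLobsterA (n : ℕ) (T : PhyloTree (Xset n)) (u v : ℕ → T.V) : Prop :=
  (∀ i j, 1 ≤ i → i ≤ n - 1 → 1 ≤ j → j ≤ n - 1 →
      (u i = u j → i = j) ∧ (v i = v j → i = j) ∧ u i ≠ v j) ∧
  (∀ p ∈ Xset n, ∀ i, 1 ≤ i → i ≤ n - 1 → T.leaf p ≠ u i ∧ T.leaf p ≠ v i) ∧
  (∀ w : T.V, (∃ p ∈ Xset n, T.leaf p = w) ∨
      (∃ i, 1 ≤ i ∧ i ≤ n - 1 ∧ (u i = w ∨ v i = w))) ∧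
  (∀ w w' : T.V, T.G.Adj w w' ↔ (AdjSpecA n T u v w w' ∨ AdjSpecA n T u v w' w))

-- ===================== auxiliary development =====================
section Aux

open SimpleGraph

lemma tree_path_support_subset {V : Type} {G : SimpleGraph V} (hT : G.IsTree) {x y : V}
    {C : Set V} (w : G.Walk x y) (hw : ∀ z ∈ w.support, z ∈ C)
    (p : G.Walk x y) (hp : p.IsPath) : ∀ z ∈ p.support, z ∈ C := by
  classical
  have h1 : (⟨p, hp⟩ : G.Path x y) = ⟨w.bypass, w.bypass_isPath⟩ := hT.2.path_unique _ _
  intro z hz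
  have h2 : p = w.bypass := congrArg Subtype.val h1
  exact hw z (w.support_bypass_subset (h2 ▸ hz))

lemma chi_cases {j s : ℕ} {β : Bool} {i : ℕ} (h : chi j (β, i) = s) :
    (s = 0 ∧ i + 2 ≤ j) ∨ (β = false ∧ s = 1 ∧ i + 1 = j) ∨ (β = true ∧ s = 2 ∧ i + 1 = j) ∨
    (β = false ∧ s = 3 ∧ (i = j ∨ i = j + 1)) ∨ (β = true ∧ s = 4 ∧ (i = j ∨ i = j + 1)) ∨
    (β = false ∧ s = 5 ∧ i = j + 2) ∨ (β = true ∧ s = 6 ∧ i = j + 2) ∨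
    (s = 7 ∧ j + 3 ≤ i) := by
  cases β <;> simp only [chi, cond] at h <;> split_ifs at h <;> simp <;> omega

/-- state of the spine vertex `u i`. -/
def fU (j i : ℕ) : ℕ :=
  if i + 2 ≤ j then 0 else if j + 2 ≤ i then 7 else if j % 2 = 0 then 4 else 3

/-- state of the side vertex `v i`. -/
def fV (j i : ℕ) : ℕ :=
  if i + 2 ≤ j then 0 else if j + 2 ≤ i then 7
  else if i = j then (if j % 2 = 0 then 3 else 4) else (if j % 2 = 0 then 4 else 3)

open Classical in
/-- state assignment on all vertices of the tree. -/
noncomputable def sig (n j : ℕ) {X : Set Lbl} (T : PhyloTree X) (u v : ℕ → T.V) (w : T.V) : ℕ :=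
  if h : ∃ i, 1 ≤ i ∧ i ≤ n - 1 ∧ u i = w then fU j h.choose
  else if h : ∃ i, 1 ≤ i ∧ i ≤ n - 1 ∧ v i = w then fV j h.choose
  else if h : ∃ p, p ∈ X ∧ T.leaf p = w then chi j h.choose else 99

variable {n j : ℕ} {T : PhyloTree (Xset n)} {u v : ℕ → T.V}

lemma sig_u (hA : IsLobsterA n T u v) {i : ℕ} (h1 : 1 ≤ i) (h2 : i ≤ n - 1) :
    sig n j T u v (u i) = fU j i := by
  have hex : ∃ i', 1 ≤ i' ∧ i' ≤ n - 1 ∧ u i' = u i := ⟨i, h1, h2, rfl⟩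
  rw [sig, dif_pos hex]
  obtain ⟨h1', h2', h3'⟩ := hex.choose_spec
  rw [(hA.1 _ _ h1' h2' h1 h2).1 h3']

lemma sig_v (hA : IsLobsterA n T u v) {i : ℕ} (h1 : 1 ≤ i) (h2 : i ≤ n - 1) :
    sig n j T u v (v i) = fV j i := by
  have hne : ¬ ∃ i', 1 ≤ i' ∧ i' ≤ n - 1 ∧ u i' = v i := by
    rintro ⟨i', k1, k2, k3⟩
    exact (hA.1 _ _ k1 k2 h1 h2).2.2 k3
  have hex : ∃ i', 1 ≤ i' ∧ i' ≤ n - 1 ∧ v i' = v i := ⟨i, h1, h2, rfl⟩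
  rw [sig, dif_neg hne, dif_pos hex]
  obtain ⟨h1', h2', h3'⟩ := hex.choose_spec
  rw [(hA.1 _ _ h1' h2' h1 h2).2.1 h3']

lemma sig_leaf (hA : IsLobsterA n T u v) {p : Lbl} (hp : p ∈ Xset n) :
    sig n j T u v (T.leaf p) = chi j p := by
  have hne1 : ¬ ∃ i, 1 ≤ i ∧ i ≤ n - 1 ∧ u i = T.leaf p := by
    rintro ⟨i, k1, k2, k3⟩
    exact (hA.2.1 p hp i k1 k2).1 k3.symm
  have hne2 : ¬ ∃ i, 1 ≤ i ∧ i ≤ n - 1 ∧ v i = T.leaf p := by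
    rintro ⟨i, k1, k2, k3⟩
    exact (hA.2.1 p hp i k1 k2).2 k3.symm
  have hex : ∃ q, q ∈ Xset n ∧ T.leaf q = T.leaf p := ⟨p, hp, rfl⟩
  rw [sig, dif_neg hne1, dif_neg hne2, dif_pos hex]
  obtain ⟨h1', h2'⟩ := hex.choose_spec
  rw [T.leaf_injOn h1' hp h2']

lemma spine (hA : IsLobsterA n T u v) :
    ∀ k i, 1 ≤ i → i ≤ k → k ≤ n - 1 →
    ∃ w : T.G.Walk (u i) (u k), ∀ z ∈ w.support, ∃ m, i ≤ m ∧ m ≤ k ∧ z = u m := by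
  intro k
  induction k with
  | zero => intro i i1 i2 _; omega
  | succ k ih =>
    intro i i1 i2 i3
    rcases eq_or_lt_of_le i2 with heq | hlt
    · subst heq
      exact ⟨SimpleGraph.Walk.nil, fun z hz => ⟨k + 1, le_rfl, le_rfl, by simpa using hz⟩⟩
    · obtain ⟨w, hw⟩ := ih i i1 (by omega) (by omega)
      have hadj : T.G.Adj (u k) (u (k + 1)) :=
        (hA.2.2.2 _ _).mpr (Or.inl (Or.inr (Or.inl ⟨k, by omega, by omega, rfl, rfl⟩)))
      refine ⟨w.concat hadj, ?_⟩
      intro z hz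
      rw [SimpleGraph.Walk.support_concat] at hz
      simp only [List.concat_eq_append, List.mem_append, List.mem_singleton] at hz
      rcases hz with hz | rfl
      · obtain ⟨m, m1, m2, m3⟩ := hw z hz
        exact ⟨m, m1, by omega, m3⟩
      · exact ⟨k + 1, by omega, le_rfl, rfl⟩

lemma leafwalk (hA : IsLobsterA n T u v) (hn : n % 2 = 0) (hn6 : 6 ≤ n)
    (β : Bool) (i : ℕ) (h1 : 1 ≤ i) (h2 : i ≤ n) :
    ∃ m, 1 ≤ m ∧ m ≤ n - 1 ∧ i - 1 ≤ m ∧ m ≤ i ∧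
      (m % 2 = cond β 1 0 ∨ (β = false ∧ (i = 1 ∨ i = n))) ∧
      ∃ w : T.G.Walk (T.leaf (β, i)) (u m),
        ∀ z ∈ w.support, z = T.leaf (β, i) ∨ z = v m ∨ z = u m := by
  have hadj := hA.2.2.2
  cases β with
  | true =>
    rcases Nat.mod_two_eq_zero_or_one i with hpar | hpar
    · -- i even: attach at v (i-1)
      refine ⟨i - 1, by omega, by omega, le_rfl, by omega,
        Or.inl (show (i - 1) % 2 = 1 by omega), ?_⟩
      have e : i - 1 + 1 = i := by omega
      have hv : T.G.Adj (v (i - 1)) (T.leaf (b (i - 1 + 1))) :=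
        (hadj _ _).mpr (Or.inl (Or.inr (Or.inr (Or.inr (Or.inr (Or.inl
          ⟨i - 1, by omega, by omega, by omega, rfl, Or.inr rfl⟩))))))
      rw [e] at hv
      have hu : T.G.Adj (v (i - 1)) (u (i - 1)) :=
        (hadj _ _).mpr (Or.inr (Or.inr (Or.inr (Or.inr (Or.inl
          ⟨i - 1, by omega, by omega, rfl, rfl⟩)))))
      refine ⟨SimpleGraph.Walk.cons hv.symm (SimpleGraph.Walk.cons hu SimpleGraph.Walk.nil), ?_⟩
      intro z hz
      change z ∈ [_, _, _] at hz
      simp only [a, b, List.mem_cons, List.not_mem_nil, or_false] at hz ⊢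
      tauto
    · -- i odd: attach at v i
      have hin : i ≤ n - 1 := by omega
      refine ⟨i, by omega, hin, by omega, le_rfl, Or.inl hpar, ?_⟩
      have hv : T.G.Adj (v i) (T.leaf (b i)) :=
        (hadj _ _).mpr (Or.inl (Or.inr (Or.inr (Or.inr (Or.inr (Or.inl
          ⟨i, by omega, hin, hpar, rfl, Or.inl rfl⟩))))))
      have hu : T.G.Adj (v i) (u i) :=
        (hadj _ _).mpr (Or.inr (Or.inr (Or.inr (Or.inr (Or.inl
          ⟨i, by omega, hin, rfl, rfl⟩)))))
      refine ⟨SimpleGraph.Walk.cons hv.symm (SimpleGraph.Walk.cons hu SimpleGraph.Walk.nil), ?_⟩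
      intro z hz
      change z ∈ [_, _, _] at hz
      simp only [a, b, List.mem_cons, List.not_mem_nil, or_false] at hz ⊢
      tauto
  | false =>
    by_cases hi1 : i = 1
    · subst hi1
      refine ⟨1, le_rfl, by omega, by omega, le_rfl, Or.inr ⟨rfl, Or.inl rfl⟩, ?_⟩
      have h : T.G.Adj (T.leaf (a 1)) (u 1) := (hadj _ _).mpr (Or.inl (Or.inl ⟨rfl, rfl⟩))
      refine ⟨SimpleGraph.Walk.cons h SimpleGraph.Walk.nil, ?_⟩
      intro z hz
      change z ∈ [_, _] at hz
      simp only [a, b, List.mem_cons, List.not_mem_nil, or_false] at hz ⊢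
      tauto
    · by_cases hin : i = n
      · refine ⟨n - 1, by omega, le_rfl, by omega, by omega, Or.inr ⟨rfl, Or.inr hin⟩, ?_⟩
        have h : T.G.Adj (u (n - 1)) (T.leaf (a n)) :=
          (hadj _ _).mpr (Or.inl (Or.inr (Or.inr (Or.inl ⟨rfl, rfl⟩))))
        have h' : T.G.Adj (u (n - 1)) (T.leaf (a i)) := by rw [hin]; exact h
        refine ⟨SimpleGraph.Walk.cons h'.symm SimpleGraph.Walk.nil, ?_⟩
        intro z hz
        change z ∈ [_, _] at hz
        simp only [a, b, List.mem_cons, List.not_mem_nil, or_false] at hz ⊢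
        tauto
      · rcases Nat.mod_two_eq_zero_or_one i with hpar | hpar
        · -- i even: attach at v i
          have hin' : i ≤ n - 1 := by omega
          refine ⟨i, by omega, hin', by omega, le_rfl, Or.inl hpar, ?_⟩
          have hv : T.G.Adj (v i) (T.leaf (a i)) :=
            (hadj _ _).mpr (Or.inl (Or.inr (Or.inr (Or.inr (Or.inr (Or.inr
              ⟨i, by omega, hin', hpar, rfl, Or.inl rfl⟩))))))
          have hu : T.G.Adj (v i) (u i) :=
            (hadj _ _).mpr (Or.inr (Or.inr (Or.inr (Or.inr (Or.inl
              ⟨i, by omega, hin', rfl, rfl⟩)))))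
          refine ⟨SimpleGraph.Walk.cons hv.symm (SimpleGraph.Walk.cons hu SimpleGraph.Walk.nil), ?_⟩
          intro z hz
          change z ∈ [_, _, _] at hz
          simp only [a, b, List.mem_cons, List.not_mem_nil, or_false] at hz ⊢
          tauto
        · -- i odd, i ≥ 3: attach at v (i-1)
          refine ⟨i - 1, by omega, by omega, le_rfl, by omega,
            Or.inl (show (i - 1) % 2 = 0 by omega), ?_⟩
          have e : i - 1 + 1 = i := by omega
          have hv : T.G.Adj (v (i - 1)) (T.leaf (a (i - 1 + 1))) :=
            (hadj _ _).mpr (Or.inl (Or.inr (Or.inr (Or.inr (Or.inr (Or.inr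
              ⟨i - 1, by omega, by omega, by omega, rfl, Or.inr rfl⟩))))))
          rw [e] at hv
          have hu : T.G.Adj (v (i - 1)) (u (i - 1)) :=
            (hadj _ _).mpr (Or.inr (Or.inr (Or.inr (Or.inr (Or.inl
              ⟨i - 1, by omega, by omega, rfl, rfl⟩)))))
          refine ⟨SimpleGraph.Walk.cons hv.symm (SimpleGraph.Walk.cons hu SimpleGraph.Walk.nil), ?_⟩
          intro z hz
          change z ∈ [_, _, _] at hz
          simp only [a, b, List.mem_cons, List.not_mem_nil, or_false] at hz ⊢
          tauto

lemma vwalk (hA : IsLobsterA n T u v) (hj1 : 1 ≤ j) (hj2 : j ≤ n - 1)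
    (β : Bool) (hpar : j % 2 = cond β 1 0) :
    ∃ w : T.G.Walk (T.leaf (β, j)) (T.leaf (β, j + 1)),
      ∀ z ∈ w.support, z = T.leaf (β, j) ∨ z = v j ∨ z = T.leaf (β, j + 1) := by
  have hadj := hA.2.2.2
  cases β with
  | true =>
    have hv1 : T.G.Adj (v j) (T.leaf (b j)) :=
      (hadj _ _).mpr (Or.inl (Or.inr (Or.inr (Or.inr (Or.inr (Or.inl
        ⟨j, hj1, hj2, hpar, rfl, Or.inl rfl⟩))))))
    have hv2 : T.G.Adj (v j) (T.leaf (b (j + 1))) :=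
      (hadj _ _).mpr (Or.inl (Or.inr (Or.inr (Or.inr (Or.inr (Or.inl
        ⟨j, hj1, hj2, hpar, rfl, Or.inr rfl⟩))))))
    refine ⟨SimpleGraph.Walk.cons hv1.symm (SimpleGraph.Walk.cons hv2 SimpleGraph.Walk.nil), ?_⟩
    intro z hz
    change z ∈ [_, _, _] at hz
    simp only [a, b, List.mem_cons, List.not_mem_nil, or_false] at hz ⊢
    tauto
  | false =>
    have hv1 : T.G.Adj (v j) (T.leaf (a j)) :=
      (hadj _ _).mpr (Or.inl (Or.inr (Or.inr (Or.inr (Or.inr (Or.inr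
        ⟨j, hj1, hj2, hpar, rfl, Or.inl rfl⟩))))))
    have hv2 : T.G.Adj (v j) (T.leaf (a (j + 1))) :=
      (hadj _ _).mpr (Or.inl (Or.inr (Or.inr (Or.inr (Or.inr (Or.inr
        ⟨j, hj1, hj2, hpar, rfl, Or.inr rfl⟩))))))
    refine ⟨SimpleGraph.Walk.cons hv1.symm (SimpleGraph.Walk.cons hv2 SimpleGraph.Walk.nil), ?_⟩
    intro z hz
    change z ∈ [_, _, _] at hz
    simp only [a, b, List.mem_cons, List.not_mem_nil, or_false] at hz ⊢
    tauto

end Aux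

section Aux2
variable {n j : ℕ} {T : PhyloTree (Xset n)} {u v : ℕ → T.V}

lemma route (hA : IsLobsterA n T u v) (hn : n % 2 = 0) (hn6 : 6 ≤ n)
    {s : ℕ} {βx : Bool} {ix : ℕ} {βy : Bool} {iy : ℕ}
    (hx1 : 1 ≤ ix) (hx2 : ix ≤ n) (hy1 : 1 ≤ iy) (hy2 : iy ≤ n)
    (hcx : chi j (βx, ix) = s) (hcy : chi j (βy, iy) = s)
    (lo hi : ℕ) (hlo : 1 ≤ lo) (hhi : hi ≤ n - 1)
    (hmx : ∀ m, 1 ≤ m → m ≤ n - 1 → ix - 1 ≤ m → m ≤ ix →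
      (m % 2 = cond βx 1 0 ∨ (βx = false ∧ (ix = 1 ∨ ix = n))) →
      lo ≤ m ∧ m ≤ hi ∧ fV j m = s)
    (hmy : ∀ m, 1 ≤ m → m ≤ n - 1 → iy - 1 ≤ m → m ≤ iy →
      (m % 2 = cond βy 1 0 ∨ (βy = false ∧ (iy = 1 ∨ iy = n))) →
      lo ≤ m ∧ m ≤ hi ∧ fV j m = s)
    (hfU : ∀ m, lo ≤ m → m ≤ hi → fU j m = s) :
    ∃ w : T.G.Walk (T.leaf (βx, ix)) (T.leaf (βy, iy)),
      ∀ z ∈ w.support, sig n j T u v z = s := by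
  obtain ⟨mx, a1, a2, a3, a4, ap, wx, hwx⟩ := leafwalk hA hn hn6 βx ix hx1 hx2
  obtain ⟨hlox, hhix, hfVx⟩ := hmx mx a1 a2 a3 a4 ap
  obtain ⟨my, c1, c2, c3, c4, cp, wy, hwy⟩ := leafwalk hA hn hn6 βy iy hy1 hy2
  obtain ⟨hloy, hhiy, hfVy⟩ := hmy my c1 c2 c3 c4 cp
  have hspine : ∃ ws : T.G.Walk (u mx) (u my),
      ∀ z ∈ ws.support, ∃ m, lo ≤ m ∧ m ≤ hi ∧ z = u m := by
    rcases le_total mx my with h | h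
    · obtain ⟨ws, hws⟩ := spine hA my mx a1 h c2
      refine ⟨ws, fun z hz => ?_⟩
      obtain ⟨m, m1, m2, m3⟩ := hws z hz
      exact ⟨m, by omega, by omega, m3⟩
    · obtain ⟨ws, hws⟩ := spine hA mx my c1 h a2
      refine ⟨ws.reverse, fun z hz => ?_⟩
      rw [SimpleGraph.Walk.support_reverse, List.mem_reverse] at hz
      obtain ⟨m, m1, m2, m3⟩ := hws z hz
      exact ⟨m, by omega, by omega, m3⟩
  obtain ⟨ws, hws⟩ := hspine
  refine ⟨wx.append (ws.append wy.reverse), ?_⟩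
  intro z hz
  rw [SimpleGraph.Walk.mem_support_append_iff, SimpleGraph.Walk.mem_support_append_iff,
    SimpleGraph.Walk.support_reverse, List.mem_reverse] at hz
  have hXx : (βx, ix) ∈ Xset n := ⟨hx1, hx2⟩
  have hXy : (βy, iy) ∈ Xset n := ⟨hy1, hy2⟩
  rcases hz with hz | hz | hz
  · rcases hwx z hz with rfl | rfl | rfl
    · rw [sig_leaf hA hXx]; exact hcx
    · rw [sig_v hA a1 a2]; exact hfVx
    · rw [sig_u hA a1 a2]; exact hfU mx hlox hhix
  · obtain ⟨m, m1, m2, rfl⟩ := hws z hz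
    rw [sig_u hA (by omega) (by omega)]; exact hfU m m1 m2
  · rcases hwy z hz with rfl | rfl | rfl
    · rw [sig_leaf hA hXy]; exact hcy
    · rw [sig_v hA c1 c2]; exact hfVy
    · rw [sig_u hA c1 c2]; exact hfU my hloy hhiy

lemma nilcase (hA : IsLobsterA n T u v) {s : ℕ} {β : Bool} {i : ℕ}
    (h1 : 1 ≤ i) (h2 : i ≤ n) (hc : chi j (β, i) = s) :
    ∃ w : T.G.Walk (T.leaf (β, i)) (T.leaf (β, i)),
      ∀ z ∈ w.support, sig n j T u v z = s := by
  refine ⟨SimpleGraph.Walk.nil, ?_⟩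
  intro z hz
  simp only [SimpleGraph.Walk.support_nil, List.mem_singleton] at hz
  subst hz
  rw [sig_leaf hA ⟨h1, h2⟩]; exact hc

lemma vcase (hA : IsLobsterA n T u v) (hj1 : 2 ≤ j) (hj2 : j ≤ n - 2) (hn6 : 6 ≤ n)
    {s : ℕ} {β : Bool} (hpar : j % 2 = cond β 1 0)
    (hcx : chi j (β, j) = s) (hcy : chi j (β, j + 1) = s)
    (hfVj : fV j j = s) :
    ∃ w : T.G.Walk (T.leaf (β, j)) (T.leaf (β, j + 1)),
      ∀ z ∈ w.support, sig n j T u v z = s := by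
  obtain ⟨w, hw⟩ := vwalk hA (by omega) (by omega) β hpar
  refine ⟨w, ?_⟩
  intro z hz
  rcases hw z hz with rfl | rfl | rfl
  · rw [sig_leaf hA ⟨by omega, by omega⟩]; exact hcx
  · rw [sig_v hA (by omega) (by omega)]; exact hfVj
  · rw [sig_leaf hA ⟨by omega, by omega⟩]; exact hcy

lemma connect (hA : IsLobsterA n T u v) (hn : n % 2 = 0) (hn6 : 6 ≤ n)
    (hj : 2 ≤ j) (hj' : j ≤ n - 2)
    (s : ℕ) (βx : Bool) (ix : ℕ) (βy : Bool) (iy : ℕ)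
    (hx : (βx, ix) ∈ Xset n) (hy : (βy, iy) ∈ Xset n)
    (hcx : chi j (βx, ix) = s) (hcy : chi j (βy, iy) = s) :
    ∃ w : T.G.Walk (T.leaf (βx, ix)) (T.leaf (βy, iy)),
      ∀ z ∈ w.support, sig n j T u v z = s := by
  have hx1 : 1 ≤ ix := hx.1
  have hx2 : ix ≤ n := hx.2
  have hy1 : 1 ≤ iy := hy.1
  have hy2 : iy ≤ n := hy.2
  rcases chi_cases hcx with ⟨hs, hix⟩ | ⟨hβx, hs, hix⟩ | ⟨hβx, hs, hix⟩ | ⟨hβx, hs, hix⟩ |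
      ⟨hβx, hs, hix⟩ | ⟨hβx, hs, hix⟩ | ⟨hβx, hs, hix⟩ | ⟨hs, hix⟩ <;>
    rcases chi_cases hcy with ⟨hs', hiy⟩ | ⟨hβy, hs', hiy⟩ | ⟨hβy, hs', hiy⟩ | ⟨hβy, hs', hiy⟩ |
      ⟨hβy, hs', hiy⟩ | ⟨hβy, hs', hiy⟩ | ⟨hβy, hs', hiy⟩ | ⟨hs', hiy⟩ <;>
    try (exfalso; omega)
  -- state 0
  · refine route hA hn hn6 hx1 hx2 hy1 hy2 hcx hcy 1 (j - 2) le_rfl (by omega) ?_ ?_ ?_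
    · intro m m1 m2 m3 m4 _
      refine ⟨m1, by omega, ?_⟩
      simp only [fV]; split_ifs <;> omega
    · intro m m1 m2 m3 m4 _
      refine ⟨m1, by omega, ?_⟩
      simp only [fV]; split_ifs <;> omega
    · intro m m1 m2; simp only [fU]; split_ifs <;> omega
  -- state 1
  · subst hβx; subst hβy
    have : ix = iy := by omega
    subst this
    exact nilcase hA hx1 hx2 hcx
  -- state 2
  · subst hβx; subst hβy
    have : ix = iy := by omega
    subst this
    exact nilcase hA hx1 hx2 hcx
  -- state 3 (β = false)
  · subst hβx; subst hβy
    rcases Nat.mod_two_eq_zero_or_one j with hpar | hpar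
    · -- j even: both attach at v j
      have hfVj : fV j j = s := by simp only [fV]; split_ifs <;> omega
      rcases hix with rfl | rfl <;> rcases hiy with rfl | rfl
      · exact nilcase hA hx1 hx2 hcx
      · exact vcase hA hj hj' hn6 hpar hcx hcy hfVj
      · obtain ⟨w, hw⟩ := vcase hA hj hj' hn6 (β := false) hpar hcy hcx hfVj
        refine ⟨w.reverse, ?_⟩
        intro z hz
        rw [SimpleGraph.Walk.support_reverse, List.mem_reverse] at hz
        exact hw z hz
      · exact nilcase hA hx1 hx2 hcx
    · -- j odd : spine route through u (j-1) .. u (j+1)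
      refine route hA hn hn6 hx1 hx2 hy1 hy2 hcx hcy (j - 1) (j + 1) (by omega) (by omega)
        ?_ ?_ ?_
      · intro m m1 m2 m3 m4 hp
        rcases hp with hp | ⟨_, hp⟩
        · have hp' : m % 2 = 0 := hp
          refine ⟨by omega, by omega, ?_⟩
          simp only [fV]; split_ifs <;> omega
        · exfalso; omega
      · intro m m1 m2 m3 m4 hp
        rcases hp with hp | ⟨_, hp⟩
        · have hp' : m % 2 = 0 := hp
          refine ⟨by omega, by omega, ?_⟩
          simp only [fV]; split_ifs <;> omega
        · exfalso; omega
      · intro m m1 m2; simp only [fU]; split_ifs <;> omega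
  -- state 4 (β = true)
  · subst hβx; subst hβy
    rcases Nat.mod_two_eq_zero_or_one j with hpar | hpar
    · -- j even : spine route through u (j-1) .. u (j+1)
      refine route hA hn hn6 hx1 hx2 hy1 hy2 hcx hcy (j - 1) (j + 1) (by omega) (by omega)
        ?_ ?_ ?_
      · intro m m1 m2 m3 m4 hp
        rcases hp with hp | ⟨hp, _⟩
        · have hp' : m % 2 = 1 := hp
          refine ⟨by omega, by omega, ?_⟩
          simp only [fV]; split_ifs <;> omega
        · exact absurd hp (by simp)
      · intro m m1 m2 m3 m4 hp
        rcases hp with hp | ⟨hp, _⟩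
        · have hp' : m % 2 = 1 := hp
          refine ⟨by omega, by omega, ?_⟩
          simp only [fV]; split_ifs <;> omega
        · exact absurd hp (by simp)
      · intro m m1 m2; simp only [fU]; split_ifs <;> omega
    · -- j odd: both attach at v j
      have hfVj : fV j j = s := by simp only [fV]; split_ifs <;> omega
      rcases hix with rfl | rfl <;> rcases hiy with rfl | rfl
      · exact nilcase hA hx1 hx2 hcx
      · exact vcase hA hj hj' hn6 hpar hcx hcy hfVj
      · obtain ⟨w, hw⟩ := vcase hA hj hj' hn6 (β := true) hpar hcy hcx hfVj
        refine ⟨w.reverse, ?_⟩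
        intro z hz
        rw [SimpleGraph.Walk.support_reverse, List.mem_reverse] at hz
        exact hw z hz
      · exact nilcase hA hx1 hx2 hcx
  -- state 5
  · subst hβx; subst hβy
    have : ix = iy := by omega
    subst this
    exact nilcase hA hx1 hx2 hcx
  -- state 6
  · subst hβx; subst hβy
    have : ix = iy := by omega
    subst this
    exact nilcase hA hx1 hx2 hcx
  -- state 7
  · refine route hA hn hn6 hx1 hx2 hy1 hy2 hcx hcy (j + 2) (n - 1) (by omega) le_rfl ?_ ?_ ?_
    · intro m m1 m2 m3 m4 _
      refine ⟨by omega, m2, ?_⟩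
      simp only [fV]; split_ifs <;> omega
    · intro m m1 m2 m3 m4 _
      refine ⟨by omega, m2, ?_⟩
      simp only [fV]; split_ifs <;> omega
    · intro m m1 m2; simp only [fU]; split_ifs <;> omega

end Aux2


theorem lobsterA_displays_chi (n : ℕ) (hn : Even n) (hn6 : 6 ≤ n)
    (T : PhyloTree (Xset n)) (u v : ℕ → T.V) (hA : IsLobsterA n T u v)
    (j : ℕ) (hj : 2 ≤ j) (hj' : j ≤ n - 2) :
    displays T (chi j) := by
  have hn2 : n % 2 = 0 := Nat.even_iff.mp hn
  intro s t hst
  rw [Set.disjoint_left]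
  intro w hws hwt
  refine absurd ?_ hst
  have key : ∀ r, w ∈ subtree T {x | chi j x = r} → sig n j T u v w = r := by
    intro r hw
    obtain ⟨x, ⟨hxr, hxX⟩, y, ⟨hyr, hyX⟩, p, hp, hmem⟩ := hw
    obtain ⟨βx, ix⟩ := x
    obtain ⟨βy, iy⟩ := y
    obtain ⟨wlk, hwlk⟩ := connect hA hn2 hn6 hj hj' r βx ix βy iy hxX hyX hxr hyr
    exact tree_path_support_subset (C := {z | sig n j T u v z = r}) T.isTree wlk hwlk p hp w hmem
  rw [← key s hws, key t hwt]

end PP
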